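/- The map ψ : G ×_P 𝒫 → 𝒴′ sending the class [g, p(w⁻¹Qw ∩ P), p̂(ŵ⁻¹Q̂ŵ ∩ P̂)] to the triple (gpw⁻¹Q, gp̂ŵ⁻¹Q̂, gP̂) is a well-defined bijection. -/
import Mathlib


/-!
STATEMENT 0: Let `Ghat` be a group with subgroups `G, Phat, Qhat ≤ Ghat`, `P = G ∩ Phat`, `Q ≤ G`,
and fixed `w ∈ G`, `what ∈ Ghat`.  With `G ×_P 𝒫` the quotient of
`G × (P/(w⁻¹Qw ∩ P)) × (Phat/(what⁻¹Qhatwhat ∩ Phat))` by the `P`-action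
`p·(g, x, xhat) = (gp⁻¹, px, pxhat)`, and `𝒴′ ⊆ (G/Q) × (Ghat/Qhat) × (Ghat/Phat)` the set of
triples `(gQ, ghatQhat, zPhat)` with `z ∈ gQwPhat` and `z ∈ ghatQhatwhatPhat`:
the map `ψ : G ×_P 𝒫 → 𝒴′`,
`[g, p(w⁻¹Qw ∩ P), phat(what⁻¹Qhatwhat ∩ Phat)] ↦ (gpw⁻¹Q, gphatwhat⁻¹Qhat, gPhat)`,
is a well-defined bijection.
-/

namespace Stmt0

variable {Ghat : Type*} [Group Ghat]

/-- Triples `(g, x, xhat)` with `g ∈ G`, `x ∈ P = G ⊓ Phat`, `xhat ∈ Phat`; such a triple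
represents the point `[g, x·(w⁻¹Qw ∩ P), xhat·(what⁻¹Qhatwhat ∩ Phat)]` of `G ×_P 𝒫`. -/
abbrev Dom (G Phat : Subgroup Ghat) : Type _ :=
  {t : Ghat × Ghat × Ghat // t.1 ∈ G ∧ t.2.1 ∈ G ⊓ Phat ∧ t.2.2 ∈ Phat}

/-- Two triples represent the same point of `G ×_P 𝒫` iff they differ by the
`P`-action `p·(g, x, xhat) = (gp⁻¹, px, pxhat)` combined with the right-coset ambiguity by
`w⁻¹Qw ∩ P` and `what⁻¹Qhatwhat ∩ Phat`; so `G ×_P 𝒫 = Quot (domRel G Phat Qhat Q w what)`. -/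
def domRel (G Phat Qhat Q : Subgroup Ghat) (w what : Ghat) (a b : Dom G Phat) : Prop :=
  ∃ p ∈ G ⊓ Phat, ∃ q, (q ∈ G ⊓ Phat ∧ w * q * w⁻¹ ∈ Q) ∧
    ∃ qhat, (qhat ∈ Phat ∧ what * qhat * what⁻¹ ∈ Qhat) ∧
      b.1.1 = a.1.1 * p⁻¹ ∧ b.1.2.1 = p * a.1.2.1 * q ∧ b.1.2.2 = p * a.1.2.2 * qhat

/-- Triples `(g, ghat, z)` with `g ∈ G`, `z ∈ gQwPhat` and `z ∈ ghatQhatwhatPhat`, representing the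
point `(gQ, ghatQhat, zPhat)` of `𝒴′` (the defining conditions do not depend on the chosen
coset representatives). -/
abbrev Cod (G Phat Qhat Q : Subgroup Ghat) (w what : Ghat) : Type _ :=
  {t : Ghat × Ghat × Ghat // t.1 ∈ G ∧
    (∃ q ∈ Q, ∃ p ∈ Phat, t.2.2 = t.1 * q * w * p) ∧
    (∃ qhat ∈ Qhat, ∃ phat ∈ Phat, t.2.2 = t.2.1 * qhat * what * phat)}

/-- Two triples represent the same point of `𝒴′` iff the components differ on the right
by elements of `Q`, `Qhat`, `Phat` respectively; so `𝒴′ = Quot (codRel G Phat Qhat Q w what)`. -/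
def codRel (G Phat Qhat Q : Subgroup Ghat) (w what : Ghat) (a b : Cod G Phat Qhat Q w what) : Prop :=
  ∃ q ∈ Q, ∃ qhat ∈ Qhat, ∃ p ∈ Phat,
    b.1.1 = a.1.1 * q ∧ b.1.2.1 = a.1.2.1 * qhat ∧ b.1.2.2 = a.1.2.2 * p

variable (G Phat Qhat Q : Subgroup Ghat) (w what : Ghat)

def psi0 (hQG : Q ≤ G) (hw : w ∈ G) (a : Dom G Phat) : Cod G Phat Qhat Q w what :=
  ⟨(a.1.1 * a.1.2.1 * w⁻¹, a.1.1 * a.1.2.2 * what⁻¹, a.1.1), by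
    obtain ⟨hg, hx, hxh⟩ := a.2
    refine ⟨mul_mem (mul_mem hg hx.1) (inv_mem hw), ⟨1, one_mem _, a.1.2.1⁻¹, inv_mem hx.2, by group⟩,
      ⟨1, one_mem _, a.1.2.2⁻¹, inv_mem hxh, by group⟩⟩⟩

lemma psi0_sound (hQG : Q ≤ G) (hw : w ∈ G) (a b : Dom G Phat)
    (h : domRel G Phat Qhat Q w what a b) :
    codRel G Phat Qhat Q w what (psi0 G Phat Qhat Q w what hQG hw a)
      (psi0 G Phat Qhat Q w what hQG hw b) := by
  obtain ⟨p, hp, q, ⟨hqP, hqQ⟩, qhat, ⟨hqhP, hqhQ⟩, h1, h2, h3⟩ := h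
  exact ⟨w * q * w⁻¹, hqQ, what * qhat * what⁻¹, hqhQ, p⁻¹, inv_mem hp.2,
    by simp only [psi0, h1, h2, h3]; group,
    by simp only [psi0, h1, h2, h3]; group,
    by simp only [psi0, h1, h3]⟩

lemma codRel_equiv : Equivalence (codRel G Phat Qhat Q w what) := by
  constructor
  · intro a; exact ⟨1, one_mem _, 1, one_mem _, 1, one_mem _, by simp, by simp, by simp⟩
  · rintro a b ⟨q, hq, qhat, hqh, p, hp, h1, h2, h3⟩
    exact ⟨q⁻¹, inv_mem hq, qhat⁻¹, inv_mem hqh, p⁻¹, inv_mem hp,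
      by rw [h1]; group, by rw [h2]; group, by rw [h3]; group⟩
  · rintro a b c ⟨q, hq, qhat, hqh, p, hp, h1, h2, h3⟩ ⟨q', hq', qhat', hqh', p', hp', h1', h2', h3'⟩
    exact ⟨q * q', mul_mem hq hq', qhat * qhat', mul_mem hqh hqh', p * p', mul_mem hp hp',
      by rw [h1', h1]; group, by rw [h2', h2]; group, by rw [h3', h3]; group⟩

lemma psi0_inj (hQG : Q ≤ G) (hw : w ∈ G) (a b : Dom G Phat)
    (h : codRel G Phat Qhat Q w what (psi0 G Phat Qhat Q w what hQG hw a)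
      (psi0 G Phat Qhat Q w what hQG hw b)) :
    domRel G Phat Qhat Q w what a b := by
  obtain ⟨⟨g, x, xh⟩, hg, hx, hxh⟩ := a
  obtain ⟨⟨g', x', xh'⟩, hg', hx', hxh'⟩ := b
  obtain ⟨q, hq, qhat, hqh, p, hp, h1, h2, h3⟩ := h
  simp only [psi0] at h1 h2 h3
  -- h3 : g' = g * p
  have hpG : p ∈ G := by
    have : p = g⁻¹ * g' := by rw [h3]; group
    rw [this]; exact mul_mem (inv_mem hg) hg'
  have hx'eq : x' = p⁻¹ * x * (w⁻¹ * q * w) := by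
    have e : g * (p * (x' * w⁻¹)) = g * (x * (w⁻¹ * q)) := by
      have := h1
      rw [h3] at this
      calc g * (p * (x' * w⁻¹)) = g * p * x' * w⁻¹ := by group
        _ = g * x * w⁻¹ * q := this
        _ = g * (x * (w⁻¹ * q)) := by group
    have e' := mul_left_cancel e
    calc x' = p⁻¹ * (p * (x' * w⁻¹)) * w := by group
      _ = p⁻¹ * (x * (w⁻¹ * q)) * w := by rw [e']
      _ = p⁻¹ * x * (w⁻¹ * q * w) := by group
  have hxh'eq : xh' = p⁻¹ * xh * (what⁻¹ * qhat * what) := by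
    have e : g * (p * (xh' * what⁻¹)) = g * (xh * (what⁻¹ * qhat)) := by
      have := h2
      rw [h3] at this
      calc g * (p * (xh' * what⁻¹)) = g * p * xh' * what⁻¹ := by group
        _ = g * xh * what⁻¹ * qhat := this
        _ = g * (xh * (what⁻¹ * qhat)) := by group
    have e' := mul_left_cancel e
    calc xh' = p⁻¹ * (p * (xh' * what⁻¹)) * what := by group
      _ = p⁻¹ * (xh * (what⁻¹ * qhat)) * what := by rw [e']
      _ = p⁻¹ * xh * (what⁻¹ * qhat * what) := by group
  have hq2mem : w⁻¹ * q * w ∈ G ⊓ Phat := by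
    have : w⁻¹ * q * w = x⁻¹ * (p * x') := by rw [hx'eq]; group
    rw [this]
    exact mul_mem (inv_mem hx) (mul_mem ⟨hpG, hp⟩ hx')
  have hqh2mem : what⁻¹ * qhat * what ∈ Phat := by
    have : what⁻¹ * qhat * what = xh⁻¹ * (p * xh') := by rw [hxh'eq]; group
    rw [this]
    exact mul_mem (inv_mem hxh) (mul_mem hp hxh')
  have eq1 : w * (w⁻¹ * q * w) * w⁻¹ = q := by group
  have eq2 : what * (what⁻¹ * qhat * what) * what⁻¹ = qhat := by group
  refine ⟨p⁻¹, inv_mem ⟨hpG, hp⟩, w⁻¹ * q * w, ⟨hq2mem, by rw [eq1]; exact hq⟩,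
    what⁻¹ * qhat * what, ⟨hqh2mem, by rw [eq2]; exact hqh⟩, ?_, ?_, ?_⟩
  · show g' = g * p⁻¹⁻¹
    rw [h3]; group
  · show x' = p⁻¹ * x * (w⁻¹ * q * w)
    exact hx'eq
  · show xh' = p⁻¹ * xh * (what⁻¹ * qhat * what)
    exact hxh'eq

theorem psi_well_defined_bijection' (hQG : Q ≤ G) (hw : w ∈ G) :
    ∃ ψ : Quot (domRel G Phat Qhat Q w what) → Quot (codRel G Phat Qhat Q w what),
      Function.Bijective ψ ∧
      ∀ a : Dom G Phat, ∃ h,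
        ψ (Quot.mk _ a) =
          Quot.mk _ ⟨(a.1.1 * a.1.2.1 * w⁻¹, a.1.1 * a.1.2.2 * what⁻¹, a.1.1), h⟩ := by
  refine ⟨Quot.lift (fun a => Quot.mk _ (psi0 G Phat Qhat Q w what hQG hw a))
    (fun a b h => Quot.sound (psi0_sound G Phat Qhat Q w what hQG hw a b h)), ⟨?_, ?_⟩, ?_⟩
  · intro x y
    induction x using Quot.ind with | _ a =>
    induction y using Quot.ind with | _ b =>
    intro h
    have hcod := (Equivalence.eqvGen_iff (codRel_equiv G Phat Qhat Q w what)).mp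
      (Quot.eqvGen_exact h)
    exact Quot.sound (psi0_inj G Phat Qhat Q w what hQG hw a b hcod)
  · intro y
    induction y using Quot.ind with | _ c =>
    obtain ⟨⟨g, ghat, z⟩, hg, ⟨q, hq, p, hp, hz1⟩, ⟨qhat, hqh, phat, hph, hz2⟩⟩ := c
    refine ⟨Quot.mk _ ⟨(g * q * w, 1, p * phat⁻¹),
      mul_mem (mul_mem hg (hQG hq)) hw, one_mem _, mul_mem hp (inv_mem hph)⟩, ?_⟩
    refine Quot.sound ?_
    refine ⟨q⁻¹, inv_mem hq, qhat⁻¹, inv_mem hqh, p, hp, ?_, ?_, ?_⟩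
    · show g = g * q * w * 1 * w⁻¹ * q⁻¹; group
    · show ghat = g * q * w * (p * phat⁻¹) * what⁻¹ * qhat⁻¹
      have key : g * q * w * p = ghat * qhat * what * phat := by rw [← hz1, hz2]
      calc ghat = ghat * qhat * what * phat * phat⁻¹ * what⁻¹ * qhat⁻¹ := by group
        _ = g * q * w * p * phat⁻¹ * what⁻¹ * qhat⁻¹ := by rw [key]
        _ = g * q * w * (p * phat⁻¹) * what⁻¹ * qhat⁻¹ := by group
    · simp only [psi0]
      simpa using hz1
  · intro a
    exact ⟨(psi0 G Phat Qhat Q w what hQG hw a).2, rfl⟩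


/-- `ψ : G ×_P 𝒫 → 𝒴′`, `[g, p̄, phatbar] ↦ (gpw⁻¹Q, gphatwhat⁻¹Qhat, gPhat)`, is a well-defined
bijection. -/
theorem psi_well_defined_bijection (G Phat Qhat Q : Subgroup Ghat) (hQG : Q ≤ G)
    (w what : Ghat) (hw : w ∈ G) :
    ∃ ψ : Quot (domRel G Phat Qhat Q w what) → Quot (codRel G Phat Qhat Q w what),
      Function.Bijective ψ ∧
      ∀ a : Dom G Phat, ∃ h,
        ψ (Quot.mk _ a) =
          Quot.mk _ ⟨(a.1.1 * a.1.2.1 * w⁻¹, a.1.1 * a.1.2.2 * what⁻¹, a.1.1), h⟩ :=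
  psi_well_defined_bijection' G Phat Qhat Q w what hQG hw

end Stmt0
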